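/- Block-coordinate descent step bound from Lemma 3: under the hypotheses of the block-Lipschitz lemma (convex differentiable $f$ with blockwise gradient Lipschitz constants $L_1, L_2$), for any $(x_1, x_2)$ the doubled-constant prox step $z_i = x_i - \tfrac{1}{2L_i}\nabla_{x_i} f(x_1, x_2)$ ($i = 1,2$) satisfies $f(z_1, z_2) \leq f(x_1, x_2) - \tfrac{1}{4L_1}\|\nabla_{x_1} f(x_1,x_2)\|^2 - \tfrac{1}{4L_2}\|\nabla_{x_2} f(x_1,x_2)\|^2$. -/

import Mathlib

open scoped RealInnerProductSpace

lemma descent_lemma {E : Type*} [NormedAddCommGroup E] [InnerProductSpace ℝ E]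
    [CompleteSpace E]
    (φ : E → ℝ) (g : E → E) (hg : ∀ x, HasGradientAt φ (g x) x)
    (L : ℝ) (hL : 0 ≤ L) (hLip : ∀ a b, ‖g a - g b‖ ≤ L * ‖a - b‖) (x y : E) :
    φ y ≤ φ x + ⟪g x, y - x⟫ + L / 2 * ‖y - x‖ ^ 2 := by
  set d := y - x with hd
  set ψ : ℝ → ℝ := fun t => φ (x + t • d) - t * ⟪g x, d⟫ - L / 2 * t ^ 2 * ‖d‖ ^ 2 with hψ
  have hline : ∀ t : ℝ, HasDerivAt (fun s : ℝ => x + s • d) d t := by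
    intro t
    simpa using ((hasDerivAt_id t).smul_const d).const_add x
  have hderiv : ∀ t : ℝ,
      HasDerivAt ψ (⟪g (x + t • d), d⟫ - ⟪g x, d⟫ - L * t * ‖d‖ ^ 2) t := by
    intro t
    have h1 : HasDerivAt (fun s : ℝ => φ (x + s • d)) ⟪g (x + t • d), d⟫ t := by
      have := (hg (x + t • d)).hasFDerivAt.comp_hasDerivAt t (hline t)
      simp only [InnerProductSpace.toDual_apply_apply] at this
      exact this
    have h2 : HasDerivAt (fun s : ℝ => s * ⟪g x, d⟫) ⟪g x, d⟫ t := by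
      simpa using (hasDerivAt_id t).mul_const ⟪g x, d⟫
    have h3 : HasDerivAt (fun s : ℝ => L / 2 * s ^ 2 * ‖d‖ ^ 2) (L * t * ‖d‖ ^ 2) t := by
      have : HasDerivAt (fun s : ℝ => s ^ 2) (2 * t) t := by
        simpa using hasDerivAt_pow 2 t
      have := ((this.const_mul (L / 2)).mul_const (‖d‖ ^ 2))
      exact this.congr_deriv (by ring)
    exact (h1.sub h2).sub h3
  have hanti : AntitoneOn ψ (Set.Icc (0 : ℝ) 1) := by
    apply antitoneOn_of_hasDerivWithinAt_nonpos (convex_Icc 0 1)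
      (fun t _ => (hderiv t).continuousAt.continuousWithinAt)
      (fun t ht => (hderiv t).hasDerivWithinAt)
    intro t ht
    rw [interior_Icc] at ht
    have ht0 : 0 ≤ t := le_of_lt ht.1
    have key : ⟪g (x + t • d) - g x, d⟫ ≤ L * t * ‖d‖ ^ 2 := by
      calc ⟪g (x + t • d) - g x, d⟫ ≤ ‖g (x + t • d) - g x‖ * ‖d‖ :=
            real_inner_le_norm _ _
        _ ≤ (L * ‖(x + t • d) - x‖) * ‖d‖ := by
            gcongr; exact hLip _ _
        _ = L * t * ‖d‖ ^ 2 := by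
            simp [norm_smul, abs_of_nonneg ht0]; ring
    have := inner_sub_left (𝕜 := ℝ) (g (x + t • d)) (g x) d
    linarith [key, this.symm.le, this.le]
  have h01 := hanti (Set.left_mem_Icc.2 zero_le_one) (Set.right_mem_Icc.2 zero_le_one)
    zero_le_one
  simp only [hψ, zero_smul, add_zero, one_smul, zero_mul, zero_pow, mul_zero, sub_zero,
    one_mul, one_pow, mul_one] at h01
  have : x + d = y := by simp [hd]
  rw [this] at h01
  linarith

/-- block-coordinate descent step bound from Lemma 3: the doubled-constant
step `z_i = x_i - (1/(2L_i)) ∇_{x_i} f(x₁,x₂)` decreases `f` by at least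
`‖∇_{x₁}f‖²/(4L₁) + ‖∇_{x₂}f‖²/(4L₂)`. -/
theorem block_coordinate_descent_step_bound
    (m1 m2 : ℕ)
    (f : EuclideanSpace ℝ (Fin m1) × EuclideanSpace ℝ (Fin m2) → ℝ)
    (hconv : ConvexOn ℝ Set.univ f)
    (g1 : EuclideanSpace ℝ (Fin m1) × EuclideanSpace ℝ (Fin m2) → EuclideanSpace ℝ (Fin m1))
    (g2 : EuclideanSpace ℝ (Fin m1) × EuclideanSpace ℝ (Fin m2) → EuclideanSpace ℝ (Fin m2))
    (hg1 : ∀ x1 x2, HasGradientAt (fun z1 => f (z1, x2)) (g1 (x1, x2)) x1)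
    (hg2 : ∀ x1 x2, HasGradientAt (fun z2 => f (x1, z2)) (g2 (x1, x2)) x2)
    (L1 L2 : ℝ) (hL1pos : 0 < L1) (hL2pos : 0 < L2)
    (hL1 : ∀ x2 a b, ‖g1 (a, x2) - g1 (b, x2)‖ ≤ L1 * ‖a - b‖)
    (hL2 : ∀ x1 a b, ‖g2 (x1, a) - g2 (x1, b)‖ ≤ L2 * ‖a - b‖) :
    ∀ x1 x2,
      f (x1 - (1 / (2 * L1)) • g1 (x1, x2), x2 - (1 / (2 * L2)) • g2 (x1, x2)) ≤
        f (x1, x2) - (1 / (4 * L1)) * ‖g1 (x1, x2)‖^2 - (1 / (4 * L2)) * ‖g2 (x1, x2)‖^2 := by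
  intro x1 x2
  set G1 := g1 (x1, x2) with hG1
  set G2 := g2 (x1, x2) with hG2
  -- block 1 descent with step 1/L1
  have hA : f (x1 - (1 / L1) • G1, x2) ≤ f (x1, x2) - (1 / (2 * L1)) * ‖G1‖ ^ 2 := by
    have := descent_lemma (fun z => f (z, x2)) (fun u => g1 (u, x2))
      (fun u => hg1 u x2) L1 hL1pos.le (hL1 x2) x1 (x1 - (1 / L1) • G1)
    have hsub : (x1 - (1 / L1) • G1) - x1 = -((1 / L1) • G1) := by abel
    rw [hsub] at this
    have hinner : ⟪G1, -((1 / L1) • G1)⟫ = -((1 / L1) * ‖G1‖ ^ 2) := by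
      rw [inner_neg_right, real_inner_smul_right, real_inner_self_eq_norm_sq]
    have hnorm : ‖-((1 / L1) • G1)‖ ^ 2 = (1 / L1) ^ 2 * ‖G1‖ ^ 2 := by
      rw [norm_neg, norm_smul]
      simp [abs_of_pos (by positivity : (0:ℝ) < 1 / L1), mul_pow]
    rw [hinner, hnorm] at this
    have harith : f (x1, x2) + -((1 / L1) * ‖G1‖ ^ 2) + L1 / 2 * ((1 / L1) ^ 2 * ‖G1‖ ^ 2)
        = f (x1, x2) - (1 / (2 * L1)) * ‖G1‖ ^ 2 := by
      field_simp
      ring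
    linarith [this, harith.le, harith.ge]
  have hB : f (x1, x2 - (1 / L2) • G2) ≤ f (x1, x2) - (1 / (2 * L2)) * ‖G2‖ ^ 2 := by
    have := descent_lemma (fun z => f (x1, z)) (fun u => g2 (x1, u))
      (fun u => hg2 x1 u) L2 hL2pos.le (hL2 x1) x2 (x2 - (1 / L2) • G2)
    have hsub : (x2 - (1 / L2) • G2) - x2 = -((1 / L2) • G2) := by abel
    rw [hsub] at this
    have hinner : ⟪G2, -((1 / L2) • G2)⟫ = -((1 / L2) * ‖G2‖ ^ 2) := by
      rw [inner_neg_right, real_inner_smul_right, real_inner_self_eq_norm_sq]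
    have hnorm : ‖-((1 / L2) • G2)‖ ^ 2 = (1 / L2) ^ 2 * ‖G2‖ ^ 2 := by
      rw [norm_neg, norm_smul]
      simp [abs_of_pos (by positivity : (0:ℝ) < 1 / L2), mul_pow]
    rw [hinner, hnorm] at this
    have harith : f (x1, x2) + -((1 / L2) * ‖G2‖ ^ 2) + L2 / 2 * ((1 / L2) ^ 2 * ‖G2‖ ^ 2)
        = f (x1, x2) - (1 / (2 * L2)) * ‖G2‖ ^ 2 := by
      field_simp
      ring
    linarith [this, harith.le, harith.ge]
  -- midpoint convexity
  have hmid : (x1 - (1 / (2 * L1)) • G1, x2 - (1 / (2 * L2)) • G2)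
      = (1/2 : ℝ) • ((x1 - (1 / L1) • G1, x2) : EuclideanSpace ℝ (Fin m1) × EuclideanSpace ℝ (Fin m2))
        + (1/2 : ℝ) • ((x1, x2 - (1 / L2) • G2) :
          EuclideanSpace ℝ (Fin m1) × EuclideanSpace ℝ (Fin m2)) := by
    apply Prod.ext
    · show x1 - (1 / (2 * L1)) • G1 = (1/2 : ℝ) • (x1 - (1 / L1) • G1) + (1/2 : ℝ) • x1
      rw [smul_sub, smul_smul]
      have : (1/2 : ℝ) * (1 / L1) = 1 / (2 * L1) := by ring
      rw [this]
      module
    · show x2 - (1 / (2 * L2)) • G2 = (1/2 : ℝ) • x2 + (1/2 : ℝ) • (x2 - (1 / L2) • G2)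
      rw [smul_sub, smul_smul]
      have : (1/2 : ℝ) * (1 / L2) = 1 / (2 * L2) := by ring
      rw [this]
      module
  have hc := hconv.2 (Set.mem_univ ((x1 - (1 / L1) • G1, x2) :
      EuclideanSpace ℝ (Fin m1) × EuclideanSpace ℝ (Fin m2)))
    (Set.mem_univ ((x1, x2 - (1 / L2) • G2) :
      EuclideanSpace ℝ (Fin m1) × EuclideanSpace ℝ (Fin m2)))
    (by norm_num : (0:ℝ) ≤ 1/2) (by norm_num : (0:ℝ) ≤ 1/2) (by norm_num)
  rw [← hmid] at hc
  have e1 : (1 / (4 * L1) : ℝ) = (1/2) * (1 / (2 * L1)) := by ring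
  have e2 : (1 / (4 * L2) : ℝ) = (1/2) * (1 / (2 * L2)) := by ring
  calc f (x1 - (1 / (2 * L1)) • G1, x2 - (1 / (2 * L2)) • G2)
      ≤ (1/2) * f (x1 - (1 / L1) • G1, x2) + (1/2) * f (x1, x2 - (1 / L2) • G2) := hc
    _ ≤ (1/2) * (f (x1, x2) - (1 / (2 * L1)) * ‖G1‖ ^ 2)
        + (1/2) * (f (x1, x2) - (1 / (2 * L2)) * ‖G2‖ ^ 2) := by gcongr <;> norm_num
    _ = f (x1, x2) - (1 / (4 * L1)) * ‖G1‖ ^ 2 - (1 / (4 * L2)) * ‖G2‖ ^ 2 := by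
        rw [e1, e2]; ring
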